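/- Let n and k be natural numbers and let v : Fin k → (Fin n → ℤ) be a finite family of integer vectors. Then the set M = {m : Fin n → ℤ | ∀ i, 0 ≤ ∑ j, m j * v i j} is a finitely generated additive submonoid of Fin n → ℤ (i.e., as an AddSubmonoid it satisfies AddSubmonoid.FG). -/

import Mathlib

/-- A submonoid of `ι → ℕ` closed under pointwise subtraction of smaller elements
is finitely generated (Dickson's lemma argument). -/
lemma subtractive_addSubmonoid_fg {ι : Type} [Fintype ι] [DecidableEq ι]
    (E : AddSubmonoid (ι → ℕ))
    (hsub : ∀ x ∈ E, ∀ y ∈ E, y ≤ x → x - y ∈ E) : E.FG := by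
  classical
  set Min : Set (ι → ℕ) :=
    {x | x ∈ E ∧ x ≠ 0 ∧ ∀ y ∈ E, y ≠ 0 → y ≤ x → y = x} with hMin
  have hchain : IsAntichain (· ≤ ·) Min := by
    intro a ha b hb hab hle
    exact hab (hb.2.2 a ha.1 ha.2.1 hle)
  haveI : ∀ i : ι, IsWellOrder ℕ (· < ·) := fun _ => inferInstance
  have hfin : Min.Finite :=
    hchain.finite_of_partiallyWellOrderedOn (Set.isPWO_of_wellQuasiOrderedLE Min)
  have key : ∀ N : ℕ, ∀ x ∈ E, (∑ j, x j) ≤ N → x ∈ AddSubmonoid.closure Min := by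
    intro N
    induction N with
    | zero =>
      intro x hx hsum
      have : x = 0 := by
        funext j
        have := Finset.sum_eq_zero_iff.mp (Nat.le_zero.mp hsum) j (Finset.mem_univ j)
        simpa using this
      rw [this]; exact zero_mem _
    | succ N ih =>
      intro x hx hsum
      by_cases hx0 : x = 0
      · rw [hx0]; exact zero_mem _
      · -- find a minimal nonzero element of E below x
        set T : Set (ι → ℕ) := {y | y ∈ E ∧ y ≠ 0 ∧ y ≤ x} with hT
        have hTfin : T.Finite := by
          apply (Set.finite_Icc (0 : ι → ℕ) x).subset
          intro y hy
          exact Set.mem_Icc.mpr ⟨fun j => Nat.zero_le _, hy.2.2⟩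
        have hTne : (hTfin.toFinset).Nonempty := by
          refine ⟨x, ?_⟩
          rw [Set.Finite.mem_toFinset]
          exact ⟨hx, hx0, le_refl x⟩
        obtain ⟨m, hmT, hmin⟩ : ∃ m ∈ hTfin.toFinset, ∀ y ∈ hTfin.toFinset, ¬ y < m := by
          obtain ⟨m, hm⟩ := hTfin.toFinset.exists_minimal hTne
          exact ⟨m, hm.1, fun y hy hlt => lt_irrefl m (lt_of_le_of_lt (hm.2 hy hlt.le) hlt)⟩
        rw [Set.Finite.mem_toFinset] at hmT
        obtain ⟨hmE, hm0, hmx⟩ := hmT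
        have hmMin : m ∈ Min := by
          refine ⟨hmE, hm0, fun y hyE hy0 hym => ?_⟩
          have hyT : y ∈ hTfin.toFinset := by
            rw [Set.Finite.mem_toFinset]
            exact ⟨hyE, hy0, hym.trans hmx⟩
          have := hmin y hyT
          rcases lt_or_eq_of_le hym with h | h
          · exact absurd h this
          · exact h
        have hxm : x - m ∈ E := hsub x hx m hmE hmx
        have hsum' : (∑ j, (x - m) j) ≤ N := by
          have h1 : (∑ j, (x - m) j) + (∑ j, m j) = ∑ j, x j := by
            rw [← Finset.sum_add_distrib]
            exact Finset.sum_congr rfl fun j _ => Nat.sub_add_cancel (hmx j)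
          have h2 : (∑ j, m j) ≠ 0 := by
            intro h
            apply hm0
            funext j
            simpa using Finset.sum_eq_zero_iff.mp h j (Finset.mem_univ j)
          omega
        have hrec := ih (x - m) hxm hsum'
        have hxeq : x = (x - m) + m := by
          funext j
          simp [Nat.sub_add_cancel (hmx j)]
        rw [hxeq]
        exact add_mem hrec (AddSubmonoid.subset_closure hmMin)
  refine ⟨hfin.toFinset, ?_⟩
  rw [Set.Finite.coe_toFinset]
  apply le_antisymm
  · rw [AddSubmonoid.closure_le]
    intro y hy
    exact hy.1
  · intro x hx
    exact key (∑ j, x j) x hx le_rfl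

/-- Gordan's lemma: the monoid of lattice points of the dual of the rational
polyhedral cone generated by the vectors `v i` is a finitely generated monoid. -/
theorem gordan_dual_cone_fg (n k : ℕ) (v : Fin k → (Fin n → ℤ)) :
    AddSubmonoid.FG
      ({ carrier := {m : Fin n → ℤ | ∀ i, 0 ≤ ∑ j, m j * v i j},
         zero_mem' := by
           intro i
           simp
         add_mem' := by
           intro a b ha hb i
           have : ∑ j, (a + b) j * v i j = (∑ j, a j * v i j) + ∑ j, b j * v i j := by
             rw [← Finset.sum_add_distrib]
             exact Finset.sum_congr rfl fun j _ => by simp [add_mul]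
           rw [this]
           exact add_nonneg (ha i) (hb i) } : AddSubmonoid (Fin n → ℤ)) := by
  classical
  -- index type for (positive parts, negative parts, slack variables)
  set ι : Type := Fin n ⊕ Fin n ⊕ Fin k with hι
  -- the projection map
  set π : (ι → ℕ) →+ (Fin n → ℤ) :=
    { toFun := fun w j => (w (Sum.inl j) : ℤ) - (w (Sum.inr (Sum.inl j)) : ℤ)
      map_zero' := by funext j; simp
      map_add' := by
        intro a b
        funext j
        simp only [Pi.add_apply]
        push_cast
        ring } with hπ
  -- the submonoid of ℕ-solutions with slack variables
  set E : AddSubmonoid (ι → ℕ) :=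
    { carrier := {w | ∀ i, ∑ j, ((w (Sum.inl j) : ℤ) - (w (Sum.inr (Sum.inl j)) : ℤ)) * v i j
                        = (w (Sum.inr (Sum.inr i)) : ℤ)}
      zero_mem' := by intro i; simp
      add_mem' := by
        intro a b ha hb i
        have h : ∑ j, (((a + b) (Sum.inl j) : ℤ) - ((a + b) (Sum.inr (Sum.inl j)) : ℤ)) * v i j
            = (∑ j, ((a (Sum.inl j) : ℤ) - (a (Sum.inr (Sum.inl j)) : ℤ)) * v i j)
              + ∑ j, ((b (Sum.inl j) : ℤ) - (b (Sum.inr (Sum.inl j)) : ℤ)) * v i j := by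
          rw [← Finset.sum_add_distrib]
          refine Finset.sum_congr rfl fun j _ => ?_
          simp only [Pi.add_apply]
          push_cast
          ring
        rw [h, ha i, hb i]
        simp only [Pi.add_apply]
        push_cast
        ring } with hE
  have hEfg : E.FG := by
    apply subtractive_addSubmonoid_fg
    intro x hx y hy hle i
    have hx' := hx i
    have hy' := hy i
    have h : ∑ j, (((x - y) (Sum.inl j) : ℤ) - ((x - y) (Sum.inr (Sum.inl j)) : ℤ)) * v i j
        = (∑ j, ((x (Sum.inl j) : ℤ) - (x (Sum.inr (Sum.inl j)) : ℤ)) * v i j)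
          - ∑ j, ((y (Sum.inl j) : ℤ) - (y (Sum.inr (Sum.inl j)) : ℤ)) * v i j := by
      rw [← Finset.sum_sub_distrib]
      refine Finset.sum_congr rfl fun j _ => ?_
      simp only [Pi.sub_apply, Nat.cast_sub (hle _)]
      ring
    rw [h, hx', hy']
    simp [Pi.sub_apply, Nat.cast_sub (hle _)]
  have hmap : (E.map π : AddSubmonoid (Fin n → ℤ)) =
      ({ carrier := {m : Fin n → ℤ | ∀ i, 0 ≤ ∑ j, m j * v i j},
         zero_mem' := by
           intro i
           simp
         add_mem' := by
           intro a b ha hb i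
           have : ∑ j, (a + b) j * v i j = (∑ j, a j * v i j) + ∑ j, b j * v i j := by
             rw [← Finset.sum_add_distrib]
             exact Finset.sum_congr rfl fun j _ => by simp [add_mul]
           rw [this]
           exact add_nonneg (ha i) (hb i) } : AddSubmonoid (Fin n → ℤ)) := by
    ext m
    simp only [AddSubmonoid.mem_map]
    constructor
    · rintro ⟨w, hw, rfl⟩ i
      have := hw i
      have hπw : ∀ j, (π w) j = (w (Sum.inl j) : ℤ) - (w (Sum.inr (Sum.inl j)) : ℤ) := fun j => rfl
      calc (0 : ℤ) ≤ (w (Sum.inr (Sum.inr i)) : ℤ) := Int.natCast_nonneg _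
        _ = ∑ j, ((w (Sum.inl j) : ℤ) - (w (Sum.inr (Sum.inl j)) : ℤ)) * v i j := (hw i).symm
        _ = ∑ j, (π w) j * v i j := by
            refine Finset.sum_congr rfl fun j _ => ?_
            rw [hπw j]
    · intro hm
      refine ⟨Sum.elim (fun j => (m j).toNat)
        (Sum.elim (fun j => (-(m j)).toNat) (fun i => (∑ j, m j * v i j).toNat)), ?_, ?_⟩
      · intro i
        have h1 : ∀ j : Fin n, ((m j).toNat : ℤ) - ((-(m j)).toNat : ℤ) = m j := by
          intro j
          omega
        have h2 : ∑ j, (((m j).toNat : ℤ) - ((-(m j)).toNat : ℤ)) * v i j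
            = ∑ j, m j * v i j := by
          refine Finset.sum_congr rfl fun j _ => ?_
          rw [h1 j]
        simpa [h2] using (Int.toNat_of_nonneg (hm i)).symm
      · funext j
        show ((m j).toNat : ℤ) - ((-(m j)).toNat : ℤ) = m j
        omega
  rw [← hmap]
  exact hEfg.map π
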